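/- (Link-capacity valid inequality) Suppose, for each flow index (k,s) with s ∈ F^k ∪ {0} and each edge (i,j) of a directed graph, r_{ij}^{k,s} ≥ 0; the link-capacity constraint Σ_{(k,s)} λ_s^k r_{ij}^{k,s} ≤ C_{ij} holds at every edge; and at a fixed node v the flow conservation gives Σ_{j:(j,v)∈L} r_{jv}^{k,0} − Σ_{j:(v,j)∈L} r_{vj}^{k,0} = x_v^{k,1} and Σ_{j:(j,v)∈L} r_{jv}^{k,s} − Σ_{j:(v,j)∈L} r_{vj}^{k,s} = x_v^{k,s+1} − x_v^{k,s} for 1 ≤ s < ℓ_k, with x values in {0,1} and λ_s^k ≥ 0. Then Σ_k ( λ_0^k x_v^{k,1} + Σ_{1≤s<ℓ_k} λ_s^k max(x_v^{k,s+1} − x_v^{k,s}, 0) ) ≤ Σ_{j:(j,v)∈L} C_{jv}. -/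
import Mathlib


/-- Link-capacity valid inequality: under nonnegativity, link capacity, and flow
conservation at node `v`, one has
`Σ_k (λ₀ᵏ x_v^{k,1} + Σ_{1≤s<ℓ_k} λ_sᵏ (x_v^{k,s+1} − x_v^{k,s})⁺) ≤ Σ_{j:(j,v)∈L} C_{jv}`. -/
theorem link_capacity_valid_inequality {I K : Type*} [Fintype I] [DecidableEq I] [Fintype K]
    (L : Finset (I × I)) (C : I × I → ℝ) (ℓ : K → ℕ) (lam : K → ℕ → ℝ)
    (x : I → K → ℕ → ℝ) (r : I × I → K → ℕ → ℝ) (v : I)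
    (hℓ : ∀ k, 1 ≤ ℓ k)
    (hC : ∀ e ∈ L, 0 ≤ C e)
    (hlam : ∀ k s, 0 ≤ lam k s)
    (hx : ∀ u k s, x u k s = 0 ∨ x u k s = 1)
    (hr : ∀ e ∈ L, ∀ k s, 0 ≤ r e k s)
    (hcap : ∀ e ∈ L, ∑ k, ∑ s ∈ Finset.range (ℓ k + 1), lam k s * r e k s ≤ C e)
    (hcons0 : ∀ k, (∑ j ∈ Finset.univ.filter (fun j => (j, v) ∈ L), r (j, v) k 0)
      - ∑ j ∈ Finset.univ.filter (fun j => (v, j) ∈ L), r (v, j) k 0 = x v k 1)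
    (hcons : ∀ k, ∀ s, 1 ≤ s → s < ℓ k →
      (∑ j ∈ Finset.univ.filter (fun j => (j, v) ∈ L), r (j, v) k s)
      - ∑ j ∈ Finset.univ.filter (fun j => (v, j) ∈ L), r (v, j) k s
      = x v k (s + 1) - x v k s) :
    ∑ k, (lam k 0 * x v k 1
        + ∑ s ∈ Finset.Ico 1 (ℓ k), lam k s * max (x v k (s + 1) - x v k s) 0)
      ≤ ∑ j ∈ Finset.univ.filter (fun j => (j, v) ∈ L), C (j, v) := by
  classical
  set In : Finset I := Finset.univ.filter (fun j => (j, v) ∈ L) with hIn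
  set Out : Finset I := Finset.univ.filter (fun j => (v, j) ∈ L) with hOut
  -- incoming sums are nonneg; outgoing sums are nonneg
  have hin_nonneg : ∀ k s, 0 ≤ ∑ j ∈ In, r (j, v) k s := by
    intro k s
    exact Finset.sum_nonneg fun j hj => hr _ (by simpa [hIn] using hj) k s
  have hout_nonneg : ∀ k s, 0 ≤ ∑ j ∈ Out, r (v, j) k s := by
    intro k s
    exact Finset.sum_nonneg fun j hj => hr _ (by simpa [hOut] using hj) k s
  -- key per-(k,s) bounds
  have h0 : ∀ k, x v k 1 ≤ ∑ j ∈ In, r (j, v) k 0 := by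
    intro k
    have := hcons0 k
    nlinarith [hout_nonneg k 0]
  have hs : ∀ k s, 1 ≤ s → s < ℓ k →
      max (x v k (s + 1) - x v k s) 0 ≤ ∑ j ∈ In, r (j, v) k s := by
    intro k s h1 h2
    have hc := hcons k s h1 h2
    have hd : x v k (s + 1) - x v k s ≤ ∑ j ∈ In, r (j, v) k s := by
      nlinarith [hout_nonneg k s]
    exact max_le hd (hin_nonneg k s)
  -- bound the LHS by a double sum of rates
  have key : ∀ k, lam k 0 * x v k 1
      + ∑ s ∈ Finset.Ico 1 (ℓ k), lam k s * max (x v k (s + 1) - x v k s) 0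
      ≤ ∑ s ∈ Finset.range (ℓ k + 1), lam k s * ∑ j ∈ In, r (j, v) k s := by
    intro k
    have hsubset : insert 0 (Finset.Ico 1 (ℓ k)) ⊆ Finset.range (ℓ k + 1) := by
      intro s hs'
      simp only [Finset.mem_insert, Finset.mem_Ico] at hs'
      rcases hs' with h | ⟨_, h⟩ <;> simp [Finset.mem_range] <;> omega
    have h1 : lam k 0 * x v k 1
        + ∑ s ∈ Finset.Ico 1 (ℓ k), lam k s * max (x v k (s + 1) - x v k s) 0
        ≤ ∑ s ∈ insert 0 (Finset.Ico 1 (ℓ k)), lam k s * ∑ j ∈ In, r (j, v) k s := by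
      rw [Finset.sum_insert (by simp)]
      refine add_le_add (mul_le_mul_of_nonneg_left (h0 k) (hlam k 0))
        (Finset.sum_le_sum fun s hsm => ?_)
      simp only [Finset.mem_Ico] at hsm
      exact mul_le_mul_of_nonneg_left (hs k s hsm.1 hsm.2) (hlam k s)
    refine h1.trans (Finset.sum_le_sum_of_subset_of_nonneg hsubset ?_)
    intro s _ _
    exact mul_nonneg (hlam k s) (hin_nonneg k s)
  calc ∑ k, (lam k 0 * x v k 1
        + ∑ s ∈ Finset.Ico 1 (ℓ k), lam k s * max (x v k (s + 1) - x v k s) 0)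
      ≤ ∑ k, ∑ s ∈ Finset.range (ℓ k + 1), lam k s * ∑ j ∈ In, r (j, v) k s :=
        Finset.sum_le_sum fun k _ => key k
    _ = ∑ j ∈ In, ∑ k, ∑ s ∈ Finset.range (ℓ k + 1), lam k s * r (j, v) k s := by
        rw [Finset.sum_comm]
        congr 1
        ext k
        rw [Finset.sum_comm]
        congr 1
        ext s
        rw [Finset.mul_sum]
    _ ≤ ∑ j ∈ In, C (j, v) := by
        refine Finset.sum_le_sum fun j hj => hcap _ (by simpa [hIn] using hj)
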